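/- If R is a finite commutative local principal ideal ring with unity whose maximal ideal M satisfies M^n = 0 and M^{n-1} ≠ 0 for some n, then the complement of the zero-divisor graph of R is a divisor graph, i.e., there exists an injective labeling f of the nonzero zero-divisors of R by positive integers such that for distinct nonzero zero-divisors a, b, one has a·b ≠ 0 if and only if f(a) divides f(b) or f(b) divides f(a). -/

import Mathlib

/-- A finite simple graph is a *divisor graph* if there is an injection from its
vertices to the positive integers such that distinct vertices are adjacent iff
one label divides the other. -/
def IsDivisorGraph {V : Type*} (G : SimpleGraph V) : Prop :=
  ∃ f : V → ℕ, Function.Injective f ∧ (∀ v, 0 < f v) ∧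
    ∀ u v : V, u ≠ v → (G.Adj u v ↔ f u ∣ f v ∨ f v ∣ f u)

/-- The vertex set of the zero-divisor graph: nonzero zero-divisors of `R`. -/
abbrev ZDVertex (R : Type*) [CommRing R] : Type _ :=
  {a : R // a ≠ 0 ∧ ∃ b : R, b ≠ 0 ∧ a * b = 0}

/-- The zero-divisor graph `Γ(R)`. -/
def zeroDivisorGraph (R : Type*) [CommRing R] : SimpleGraph (ZDVertex R) where
  Adj x y := x ≠ y ∧ x.val * y.val = 0
  symm := ⟨fun x y ⟨h1, h2⟩ => ⟨h1.symm, by rwa [mul_comm]⟩⟩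
  loopless := ⟨fun x ⟨h, _⟩ => h rfl⟩

/-- The complement of the zero-divisor graph `Γ(R)̄`. -/
def compZDGraph (R : Type*) [CommRing R] : SimpleGraph (ZDVertex R) where
  Adj x y := x ≠ y ∧ x.val * y.val ≠ 0
  symm := ⟨fun x y ⟨h1, h2⟩ => ⟨h1.symm, by rwa [mul_comm]⟩⟩
  loopless := ⟨fun x ⟨h, _⟩ => h rfl⟩


lemma divisor_label {V : Type*} [Fintype V] (w : V → ℕ) (t : ℕ) (hw : ∀ a, w a ≤ t) :
    ∃ f : V → ℕ, Function.Injective f ∧ (∀ v, 0 < f v) ∧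
      ∀ a b : V, a ≠ b → (w a + w b ≤ t ↔ f a ∣ f b ∨ f b ∣ f a) := by
  classical
  set g : V → ℕ := fun a => ((Fintype.equivFin V) a : ℕ) with hg
  have hginj : Function.Injective g := fun a b h =>
    (Fintype.equivFin V).injective (Fin.val_injective h)
  set Low : V → Prop := fun a => 2 * w a ≤ t with hLow
  set lt' : V → V → Prop := fun a b => w a < w b ∨ (w a = w b ∧ g a < g b) with hlt'
  have htrich : ∀ a b : V, a ≠ b → lt' a b ∨ lt' b a := by
    intro a b hab
    have hgne : g a ≠ g b := fun h => hab (hginj h)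
    simp only [hlt']
    omega
  have htrans : ∀ a b c : V, lt' a b → lt' b c → lt' a c := by
    intro a b c h1 h2; simp only [hlt'] at *; omega
  have hirr : ∀ a : V, ¬ lt' a a := by intro a; simp only [hlt']; omega
  set rank : V → ℕ := fun a => (Finset.univ.filter (fun x => Low x ∧ lt' x a)).card with hrank
  set mc : V → ℕ := fun a => (Finset.univ.filter (fun x => Low x ∧ w x ≤ t - w a)).card with hmc
  set q : V → ℕ := fun a => Nat.nth Nat.Prime (g a + 2) with hq
  have hqprime : ∀ a, Nat.Prime (q a) := fun a => Nat.prime_nth_prime _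
  have hnth_mono := Nat.nth_strictMono Nat.infinite_setOf_prime
  have hq4 : ∀ a, 4 ≤ q a := by
    intro a
    have h0 : 2 ≤ Nat.nth Nat.Prime 0 := (Nat.prime_nth_prime 0).two_le
    have h1 : Nat.nth Nat.Prime 0 < Nat.nth Nat.Prime 1 := hnth_mono (by norm_num)
    have h2 : Nat.nth Nat.Prime 1 < Nat.nth Nat.Prime (g a + 2) :=
      hnth_mono (by omega)
    simp only [hq]
    omega
  have hqinj : Function.Injective q := by
    intro a b h
    have := Nat.nth_injective Nat.infinite_setOf_prime h
    exact hginj (by omega)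
  have hq3 : ∀ a, ¬ (3 ∣ q a) := by
    intro a h3
    have := (Nat.prime_dvd_prime_iff_eq Nat.prime_three (hqprime a)).mp h3
    have := hq4 a; omega
  have hqnd : ∀ a (j : ℕ), ¬ (q a ∣ 3 ^ j) := by
    intro a j h
    have := (Nat.prime_dvd_prime_iff_eq (hqprime a) Nat.prime_three).mp
      ((hqprime a).dvd_of_dvd_pow h)
    have := hq4 a; omega
  have hdvd_iff : ∀ a (i j : ℕ), (3 ^ i ∣ 3 ^ j * q a ↔ i ≤ j) := by
    intro a i j
    constructor
    · intro h
      have hcop : Nat.Coprime (3 ^ i) (q a) :=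
        Nat.Coprime.pow_left _ ((Nat.coprime_primes Nat.prime_three (hqprime a)).mpr
          (by have := hq4 a; omega))
      have := hcop.dvd_of_dvd_mul_right h
      exact (Nat.pow_dvd_pow_iff_le_right (by norm_num)).mp this
    · intro h; exact dvd_mul_of_dvd_left (pow_dvd_pow 3 h) _
  have hqq : ∀ a b (j j' : ℕ), 3 ^ j * q a ∣ 3 ^ j' * q b → a = b := by
    intro a b j j' h
    have h1 : q a ∣ 3 ^ j' * q b := (dvd_mul_left _ _).trans h
    rcases (Nat.Prime.dvd_mul (hqprime a)).mp h1 with h2 | h2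
    · exact absurd h2 (hqnd a j')
    · exact hqinj ((Nat.prime_dvd_prime_iff_eq (hqprime a) (hqprime b)).mp h2)
  -- rank strictly monotone among Low vertices
  have hrank_mono : ∀ a b : V, Low a → Low b → lt' a b → rank a < rank b := by
    intro a b ha hb hab
    apply Finset.card_lt_card
    constructor
    · intro x hx
      simp only [Finset.mem_filter, Finset.mem_univ, true_and] at hx ⊢
      exact ⟨hx.1, htrans _ _ _ hx.2 hab⟩
    · intro hsup
      have : a ∈ Finset.univ.filter (fun x => Low x ∧ lt' x b) := by
        simp only [Finset.mem_filter, Finset.mem_univ, true_and]; exact ⟨ha, hab⟩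
      have := hsup this
      simp only [Finset.mem_filter, Finset.mem_univ, true_and] at this
      exact hirr a this.2
  have hrank_inj : ∀ a b : V, Low a → Low b → rank a = rank b → a = b := by
    intro a b ha hb h
    by_contra hab
    rcases htrich a b hab with h' | h'
    · exact absurd h (Nat.ne_of_lt (hrank_mono a b ha hb h'))
    · exact absurd h.symm (Nat.ne_of_lt (hrank_mono b a hb ha h'))
  -- prefix lemma
  have hprefix : ∀ a c : V, Low c → (rank c < mc a ↔ w c ≤ t - w a) := by
    intro a c hc
    constructor
    · intro h
      by_contra hcontra
      push_neg at hcontra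
      have hsub : Finset.univ.filter (fun x => Low x ∧ w x ≤ t - w a) ⊆
          Finset.univ.filter (fun x => Low x ∧ lt' x c) := by
        intro x hx
        simp only [Finset.mem_filter, Finset.mem_univ, true_and] at hx ⊢
        refine ⟨hx.1, Or.inl ?_⟩
        omega
      have h2 : mc a ≤ rank c := Finset.card_le_card hsub
      omega
    · intro h
      apply Finset.card_lt_card
      constructor
      · intro x hx
        simp only [Finset.mem_filter, Finset.mem_univ, true_and] at hx ⊢
        refine ⟨hx.1, ?_⟩
        rcases hx.2 with h1 | ⟨h1, _⟩ <;> omega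
      · intro hsup
        have : c ∈ Finset.univ.filter (fun x => Low x ∧ w x ≤ t - w a) := by
          simp only [Finset.mem_filter, Finset.mem_univ, true_and]; exact ⟨hc, h⟩
        have := hsup this
        simp only [Finset.mem_filter, Finset.mem_univ, true_and] at this
        exact hirr c this.2
  refine ⟨fun a => if Low a then 3 ^ (rank a + 1) else 3 ^ (mc a) * q a, ?_, ?_, ?_⟩
  · -- injectivity
    intro a b h
    by_cases ha : Low a <;> by_cases hb : Low b <;> simp only [ha, hb, if_pos, if_neg,
      if_true, if_false] at h
    · exact hrank_inj a b ha hb (by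
        have := Nat.pow_right_injective (le_refl 2)
        have h3 : (3:ℕ) ^ (rank a + 1) = 3 ^ (rank b + 1) := h
        have := Nat.pow_right_injective (by norm_num : 2 ≤ 3) h3
        omega)
    · exact absurd (h ▸ dvd_mul_left (q b) (3 ^ mc b)) (hqnd b (rank a + 1))
    · exact absurd (h.symm ▸ dvd_mul_left (q a) (3 ^ mc a)) (hqnd a (rank b + 1))
    · exact hqq a b _ _ (dvd_of_eq h)
  · intro a
    by_cases ha : Low a <;> simp only [ha, if_true, if_false]
    · positivity
    · have := hq4 a; positivity
  · intro a b hab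
    by_cases ha : Low a <;> by_cases hb : Low b <;>
      simp only [ha, hb, if_true, if_false]
    · -- both low: both sides true
      constructor
      · intro _
        rcases le_total (rank a + 1) (rank b + 1) with h | h
        · exact Or.inl (pow_dvd_pow 3 h)
        · exact Or.inr (pow_dvd_pow 3 h)
      · intro _
        simp only [hLow] at ha hb
        omega
    · -- a low, b high
      have hiff : w a + w b ≤ t ↔ rank a < mc b := by
        rw [hprefix b a ha]
        have := hw b
        omega
      rw [hiff]
      constructor
      · intro h
        exact Or.inl ((hdvd_iff b (rank a + 1) (mc b)).mpr (by omega))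
      · rintro (h | h)
        · have := (hdvd_iff b (rank a + 1) (mc b)).mp h; omega
        · exact absurd ((dvd_mul_left _ _).trans h)
            (by
              intro hcon
              exact hqnd b (rank a + 1) hcon)
    · -- a high, b low
      have hiff : w a + w b ≤ t ↔ rank b < mc a := by
        rw [hprefix a b hb]
        have := hw a
        omega
      rw [hiff]
      constructor
      · intro h
        exact Or.inr ((hdvd_iff a (rank b + 1) (mc a)).mpr (by omega))
      · rintro (h | h)
        · exact absurd ((dvd_mul_left _ _).trans h)
            (fun hcon => hqnd a (rank b + 1) hcon)
        · have := (hdvd_iff a (rank b + 1) (mc a)).mp h; omega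
    · -- both high: both sides false
      constructor
      · intro h
        simp only [hLow] at ha hb
        omega
      · rintro (h | h)
        · exact absurd (hqq a b _ _ h) hab
        · exact absurd (hqq b a _ _ h) (Ne.symm hab)

theorem compZDGraph_isDivisorGraph_of_local (R : Type*) [CommRing R] [Fintype R]
    [IsLocalRing R] [IsPrincipalIdealRing R] (n : ℕ)
    (hn : IsLocalRing.maximalIdeal R ^ n = ⊥)
    (hn' : IsLocalRing.maximalIdeal R ^ (n - 1) ≠ ⊥) :
    IsDivisorGraph (compZDGraph R) := by
  classical
  haveI : Fintype (ZDVertex R) := Fintype.ofFinite _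
  set M : Ideal R := IsLocalRing.maximalIdeal R with hM
  obtain _ | m := n
  · -- n = 0 : the ring is trivial, no vertices
    haveI : IsEmpty (ZDVertex R) := by
      constructor
      intro a
      exact a.2.1 (by
        have : a.1 ∈ (⊥ : Ideal R) := by rw [← hn]; simp
        simpa using this)
    exact ⟨fun a => isEmptyElim a, fun a => isEmptyElim a, fun a => isEmptyElim a,
      fun a => isEmptyElim a⟩
  · have hn' : M ^ m ≠ ⊥ := by simpa using hn'
    obtain ⟨p, hpspan⟩ := (IsPrincipalIdealRing.principal M).principal
    have hpspan : M = Ideal.span {p} := hpspan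
    have hpM : p ∈ M := by rw [hpspan]; exact Ideal.mem_span_singleton_self p
    -- every vertex is in M
    have hvert : ∀ a : ZDVertex R, a.1 ∈ M := by
      intro a
      rw [hM, IsLocalRing.mem_maximalIdeal]
      intro hu
      obtain ⟨b, hb0, hab⟩ := a.2.2
      exact hb0 ((hu.mul_right_eq_zero).mp hab)
    have hex : ∀ a : ZDVertex R, ∃ k, a.1 ∉ M ^ (k + 1) := by
      intro a
      exact ⟨m, fun h => a.2.1 (by rwa [hn, Ideal.mem_bot] at h)⟩
    set v : ZDVertex R → ℕ := fun a => Nat.find (hex a) with hv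
    have hv1 : ∀ a, a.1 ∉ M ^ (v a + 1) := fun a => Nat.find_spec (hex a)
    have hvle : ∀ a, v a ≤ m := fun a =>
      Nat.find_min' (hex a) (fun h => a.2.1 (by rwa [hn, Ideal.mem_bot] at h))
    have hv_mem : ∀ a, a.1 ∈ M ^ (v a) := by
      intro a
      rcases hva : v a with _ | k
      · simp
      · have hk : k < v a := by omega
        have := Nat.find_min (hex a) hk
        rw [not_not] at this
        exact this
    have hv_pos : ∀ a, 1 ≤ v a := by
      intro a
      by_contra h
      have h0 : v a = 0 := by omega
      have := hv1 a
      rw [h0, pow_one] at this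
      exact this (hvert a)
    -- unit decomposition
    have hunit : ∀ a : ZDVertex R, ∃ c : R, IsUnit c ∧ a.1 = c * p ^ (v a) := by
      intro a
      have := hv_mem a
      rw [hpspan, Ideal.span_singleton_pow, Ideal.mem_span_singleton'] at this
      obtain ⟨c, hc⟩ := this
      refine ⟨c, ?_, hc.symm⟩
      by_contra hcu
      have hcM : c ∈ M := by rw [hM, IsLocalRing.mem_maximalIdeal]; exact hcu
      have hmem : a.1 ∈ M ^ (v a + 1) := by
        rw [pow_succ]
        have hpk : (p : R) ^ (v a) ∈ M ^ (v a) := by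
          rw [hpspan, Ideal.span_singleton_pow]
          exact Ideal.mem_span_singleton_self _
        have h2 := Ideal.mul_mem_mul hpk hcM
        rwa [mul_comm (p ^ v a) c, hc] at h2
      exact hv1 a hmem
    have hpm : p ^ m ≠ 0 := by
      intro h
      apply hn'
      rw [hpspan, Ideal.span_singleton_pow, h, Ideal.span_singleton_eq_bot]
    have hpk : ∀ k, k ≤ m → (p : R) ^ k ≠ 0 := by
      intro k hk h
      apply hpm
      calc p ^ m = p ^ k * p ^ (m - k) := by rw [← pow_add]; congr 1; omega
        _ = 0 := by rw [h, zero_mul]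
    -- key valuation lemma
    have key : ∀ a b : ZDVertex R, (a.1 * b.1 ≠ 0 ↔ v a + v b ≤ m) := by
      intro a b
      constructor
      · intro hne
        by_contra h
        push_neg at h
        apply hne
        have hmem : a.1 * b.1 ∈ M ^ (v a) * M ^ (v b) :=
          Ideal.mul_mem_mul (hv_mem a) (hv_mem b)
        rw [← pow_add] at hmem
        have : a.1 * b.1 ∈ M ^ (m + 1) := Ideal.pow_le_pow_right (by omega) hmem
        rwa [hn, Ideal.mem_bot] at this
      · intro hle
        obtain ⟨c, hcu, hc⟩ := hunit a
        obtain ⟨d, hdu, hd⟩ := hunit b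
        rw [hc, hd]
        intro h
        have h2 : (c * d) * (p ^ (v a) * p ^ (v b)) = 0 := by rw [← h]; ring
        rw [(hcu.mul hdu).mul_right_eq_zero, ← pow_add] at h2
        exact hpk _ hle h2
    obtain ⟨f, hinj, hpos, hiff⟩ := divisor_label v m hvle
    refine ⟨f, hinj, hpos, ?_⟩
    intro a b hab
    rw [← hiff a b hab]
    show (a ≠ b ∧ a.1 * b.1 ≠ 0) ↔ _
    rw [key a b]
    constructor
    · exact fun h => h.2
    · exact fun h => ⟨hab, h⟩
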